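/- Let a finite group G act on a finite set X and let Y be a finite set of colors, with G acting on the set W = Fun(X,Y) of colorings by (w·g)(x) = w(gx). Then |W/G| · |G| = ∑_{w∈W} |G_w| = ∑_{g∈G} |W^g|, and consequently Pólya's enumeration formula |Fun(X,Y)/G| = (1/|G|) ∑_{g∈G} |Y|^{c(g)} holds, where c(g) is the number of cycles of g acting on X. -/

import Mathlib

/-- The equivalence relation on colorings `W = Fun(X,Y)` induced by the right action
`(w·g)(x) = w(g·x)` of `G`: two colorings are equivalent iff they lie in the same
`G`-orbit. -/
def colorSetoid (G X Y : Type) [Group G] [MulAction G X] : Setoid (X → Y) where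
  r w w' := ∃ g : G, ∀ x, w' x = w (g • x)
  iseqv := by
    constructor
    · intro w; exact ⟨1, fun x => by rw [one_smul]⟩
    · rintro w w' ⟨g, hg⟩
      exact ⟨g⁻¹, fun x => by rw [hg, smul_inv_smul]⟩
    · rintro w w' w'' ⟨g, hg⟩ ⟨h, hh⟩
      exact ⟨g * h, fun x => by rw [hh, hg, mul_smul]⟩

section Aux
variable {G X Y : Type} [Group G] [MulAction G X]

attribute [local instance] arrowAction

lemma aux_hsmul (g : G) (w : X → Y) (x : X) : (g • w) x = w (g⁻¹ • x) := rfl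

lemma aux_zpow_fixed {g : G} {w : X → Y} (hw : ∀ x, w (g • x) = w x) :
    ∀ (n : ℤ) (x : X), w (g ^ n • x) = w x := by
  have hinv : ∀ x, w (g⁻¹ • x) = w x := fun x => by
    conv_rhs => rw [← smul_inv_smul g x]
    rw [hw]
  intro n
  induction n using Int.induction_on with
  | zero => intro x; simp
  | succ n ih => intro x
                 rw [zpow_add_one, mul_smul, ih, hw]
  | pred n ih => intro x
                 rw [zpow_sub_one, mul_smul, ih, hinv]

/-- fixed colorings of `g` correspond to colorings of the orbit space of `⟨g⟩`. -/
noncomputable def fixedEquiv (g : G) :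
    {w : X → Y // ∀ x, w (g • x) = w x} ≃
      (Quotient (MulAction.orbitRel (Subgroup.zpowers g) X) → Y) where
  toFun := fun ⟨w, hw⟩ => Quotient.lift w (by
    intro a b hab
    obtain ⟨h, rfl⟩ := hab
    obtain ⟨n, hn⟩ := Subgroup.mem_zpowers_iff.mp h.2
    show w ((h : G) • b) = w b
    rw [← hn]
    exact aux_zpow_fixed hw n b)
  invFun := fun f => ⟨fun x => f ⟦x⟧, fun x =>
    congrArg f (Quotient.sound
      (MulAction.mem_orbit x (⟨g, Subgroup.mem_zpowers g⟩ : Subgroup.zpowers g)))⟩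
  left_inv := fun ⟨w, hw⟩ => rfl
  right_inv := fun f => funext fun q => Quotient.inductionOn q fun x => rfl

lemma fixed_iff (g : G) (w : X → Y) : (∀ x, w (g • x) = w x) ↔ g • w = w := by
  constructor
  · intro h
    funext x
    rw [aux_hsmul]
    calc w (g⁻¹ • x) = w (g • g⁻¹ • x) := (h _).symm
      _ = w x := by rw [smul_inv_smul]
  · intro h x
    have := congrFun h (g • x)
    rw [aux_hsmul, inv_smul_smul] at this
    exact this.symm

lemma colorSetoid_eq' : (colorSetoid G X Y).r = (MulAction.orbitRel G (X → Y)).r := by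
  ext w w'
  show (∃ g : G, ∀ x, w' x = w (g • x)) ↔ w ∈ MulAction.orbit G w'
  constructor
  · rintro ⟨g, hg⟩
    refine ⟨g, funext fun x => ?_⟩
    show (g • w') x = w x
    rw [aux_hsmul, hg (g⁻¹ • x), smul_inv_smul]
  · rintro ⟨g, rfl⟩
    refine ⟨g, fun x => ?_⟩
    show w' x = (g • w') (g • x)
    rw [aux_hsmul, inv_smul_smul]

end Aux

lemma double_count (A B : Type) [Fintype A] [Fintype B] (P : A → B → Prop) :
    ∑ a : A, Nat.card {b // P a b} = ∑ b : B, Nat.card {a // P a b} := by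
  classical
  simp_rw [Nat.card_eq_fintype_card, Fintype.card_subtype, Finset.card_filter]
  exact Finset.sum_comm

theorem polya_enumeration (G X Y : Type) [Group G] [Fintype G] [Fintype X] [Fintype Y]
    [DecidableEq X] [MulAction G X] :
    Nat.card (Quotient (colorSetoid G X Y)) * Nat.card G
        = ∑ w : X → Y, Nat.card {g : G // ∀ x, w (g • x) = w x} ∧
    (∑ w : X → Y, Nat.card {g : G // ∀ x, w (g • x) = w x})
        = ∑ g : G, Nat.card {w : X → Y // ∀ x, w (g • x) = w x} ∧
    Nat.card (Quotient (colorSetoid G X Y)) * Nat.card G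
        = ∑ g : G, Nat.card Y ^
            Nat.card (Quotient (MulAction.orbitRel (Subgroup.zpowers g) X)) := by
  classical
  letI : MulAction G (X → Y) := arrowAction
  -- Burnside
  have hQ : Nat.card (Quotient (colorSetoid G X Y))
      = Nat.card (MulAction.orbitRel.Quotient G (X → Y)) := by
    apply Nat.card_congr
    exact Quotient.congrRight (fun a b => by rw [colorSetoid_eq'])
  have hfix : ∀ g : G, Nat.card {w : X → Y // ∀ x, w (g • x) = w x}
      = Fintype.card (MulAction.fixedBy (X → Y) g) := by
    intro g
    rw [← Nat.card_eq_fintype_card]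
    exact Nat.card_congr (Equiv.subtypeEquivRight fun w => fixed_iff g w)
  have burnside : Nat.card (Quotient (colorSetoid G X Y)) * Nat.card G
      = ∑ g : G, Nat.card {w : X → Y // ∀ x, w (g • x) = w x} := by
    rw [hQ]
    simp_rw [hfix, Nat.card_eq_fintype_card]
    exact (MulAction.sum_card_fixedBy_eq_card_orbits_mul_card_group G (X → Y)).symm
  have h2 : (∑ w : X → Y, Nat.card {g : G // ∀ x, w (g • x) = w x})
      = ∑ g : G, Nat.card {w : X → Y // ∀ x, w (g • x) = w x} :=
    double_count (X → Y) G (fun w g => ∀ x, w (g • x) = w x)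
  refine ⟨by rw [burnside, h2], h2, ?_⟩
  rw [burnside]
  refine Finset.sum_congr rfl fun g _ => ?_
  rw [Nat.card_congr (fixedEquiv (Y := Y) g), Nat.card_fun]
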